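/- arXiv:1308.4745 — 5 statements merged into one kernel-verified Lean document; each statement's English description precedes it below -/
import Mathlib

section
/- For a complex n×n matrix F, the Taylor coefficients of α ↦ det(I − αF) are given by det(I − αF) = Σ_{m=0}^n (a_m/m!) α^m, where a_m = (−1)^m det of the m×m matrix whose (i,j) entry is Tr(F^{i−j+1}) if i ≥ j, equals m−i if j = i+1, and 0 if j > i+1 (the Plemelj–Smithies formula). -/
set_option maxHeartbeats 1000000

section PShess

open Matrix Polynomial Finset

noncomputable def hessG (p : ℕ → ℂ) (j m : ℕ) : Matrix (Fin m) (Fin m) ℂ :=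
  Matrix.of fun i k =>
    if (k : ℕ) = 0 then p ((i : ℕ) + j + 1)
    else if (k : ℕ) ≤ (i : ℕ) then p ((i : ℕ) - (k : ℕ) + 1)
    else if (k : ℕ) = (i : ℕ) + 1 then ((m - 1 - (i : ℕ) : ℕ) : ℂ) else 0

lemma hessG_det_one (p : ℕ → ℂ) (j : ℕ) : (hessG p j 1).det = p (j + 1) := by
  rw [det_fin_one]
  simp [hessG]

lemma hessG_minor0 (p : ℕ → ℂ) (j m : ℕ) :
    (hessG p j (m + 1)).submatrix Fin.succ ((0 : Fin (m + 1)).succAbove) = hessG p 0 m := by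
  ext i k
  simp only [submatrix_apply, Fin.succAbove_zero, hessG, of_apply, Fin.val_succ]
  by_cases h0 : (k : ℕ) = 0
  · rw [if_neg (by omega), if_pos (by omega), if_pos h0]
    congr 1; omega
  · rw [if_neg (by omega), if_neg h0]
    by_cases h1 : (k : ℕ) ≤ (i : ℕ)
    · rw [if_pos (by omega), if_pos h1]
      congr 1; omega
    · rw [if_neg (by omega), if_neg h1]
      by_cases h2 : (k : ℕ) = (i : ℕ) + 1
      · rw [if_pos (by omega), if_pos h2]
        congr 1; omega
      · rw [if_neg (by omega), if_neg h2]

lemma succAbove_one_val {m : ℕ} (k : Fin (m + 1)) :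
    (((1 : Fin (m + 2)).succAbove k : Fin (m + 2)) : ℕ) = if (k : ℕ) = 0 then 0 else (k : ℕ) + 1 := by
  by_cases h : (k : ℕ) = 0
  · rw [if_pos h, Fin.succAbove_of_castSucc_lt]
    · simp [h]
    · rw [Fin.lt_def]; simp [h]
  · rw [if_neg h, Fin.succAbove_of_le_castSucc]
    · simp
    · rw [Fin.le_def]; simp; omega

lemma hessG_minor1 (p : ℕ → ℂ) (j m : ℕ) :
    (hessG p j (m + 2)).submatrix Fin.succ ((1 : Fin (m + 2)).succAbove) = hessG p (j + 1) (m + 1) := by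
  ext i k
  simp only [submatrix_apply, hessG, of_apply, Fin.val_succ]
  rw [succAbove_one_val]
  by_cases h0 : (k : ℕ) = 0
  · rw [if_pos h0, if_pos rfl, if_pos h0]
    congr 1; omega
  · rw [if_neg h0, if_neg (by omega), if_neg h0]
    by_cases h1 : (k : ℕ) ≤ (i : ℕ)
    · rw [if_pos (by omega), if_pos h1]
      congr 1; omega
    · rw [if_neg (by omega), if_neg h1]
      by_cases h2 : (k : ℕ) = (i : ℕ) + 1
      · rw [if_pos (by omega), if_pos h2]
        congr 1; omega
      · rw [if_neg (by omega), if_neg h2]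

lemma hessG_det_succ (p : ℕ → ℂ) (j m : ℕ) :
    (hessG p j (m + 2)).det =
      p (j + 1) * (hessG p 0 (m + 1)).det - ((m + 1 : ℕ) : ℂ) * (hessG p (j + 1) (m + 1)).det := by
  rw [det_succ_row_zero, Fin.sum_univ_succ, Fin.sum_univ_succ]
  have h00 : hessG p j (m + 2) 0 0 = p (j + 1) := by simp [hessG]
  have h01 : hessG p j (m + 2) 0 (Fin.succ 0) = ((m + 1 : ℕ) : ℂ) := by
    simp only [hessG, of_apply]
    rw [if_neg (by simp), if_neg (by simp), if_pos (by simp)]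
    have h : (m + 2 - 1 - ((0 : Fin (m + 2)) : ℕ)) = m + 1 := by simp
    rw [h]
  have hrest : ∀ k : Fin m, hessG p j (m + 2) 0 (Fin.succ (Fin.succ k)) = 0 := by
    intro k
    simp only [hessG, of_apply, Fin.val_succ, Fin.val_zero]
    simp
  rw [Finset.sum_eq_zero (fun k _ => by rw [hrest k]; ring)]
  rw [h00, h01, Fin.succ_zero_eq_one, hessG_minor0, hessG_minor1]
  simp only [Fin.val_zero, pow_zero, one_mul, Fin.val_one, pow_one, add_zero]
  push_cast
  ring

theorem hessG_det (p e : ℕ → ℂ) (he0 : e 0 = 1)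
    (hN : ∀ m : ℕ, ((m + 1 : ℕ) : ℂ) * e (m + 1) =
      ∑ k ∈ Finset.range (m + 1), (-1) ^ k * p (k + 1) * e (m - k)) :
    ∀ m j : ℕ, (hessG p j (m + 1)).det =
      (Nat.factorial m : ℂ) * ∑ k ∈ Finset.range (m + 1), (-1) ^ k * p (j + k + 1) * e (m - k) := by
  intro m
  induction m with
  | zero =>
    intro j
    show (hessG p j 1).det = _
    rw [hessG_det_one]
    simp [he0]
  | succ m ih =>
    intro j
    show (hessG p j (m + 2)).det = (Nat.factorial (m + 1) : ℂ) *
      ∑ k ∈ Finset.range (m + 2), (-1) ^ k * p (j + k + 1) * e (m + 1 - k)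
    rw [hessG_det_succ, ih 0, ih (j + 1)]
    have hsum : ∑ k ∈ Finset.range (m + 2), (-1 : ℂ) ^ k * p (j + k + 1) * e (m + 1 - k)
        = -(∑ k ∈ Finset.range (m + 1), (-1) ^ k * p (j + 1 + k + 1) * e (m - k))
          + p (j + 1) * e (m + 1) := by
      rw [Finset.sum_range_succ' (fun k => (-1 : ℂ) ^ k * p (j + k + 1) * e (m + 1 - k)) (m + 1)]
      congr 1
      · rw [← Finset.sum_neg_distrib]
        refine Finset.sum_congr rfl fun k hk => ?_
        have h1 : j + (k + 1) + 1 = j + 1 + k + 1 := by ring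
        have h2 : m + 1 - (k + 1) = m - k := by omega
        rw [h1, h2]
        ring
      · norm_num
    rw [hsum]
    have h0 : ∑ k ∈ Finset.range (m + 1), (-1 : ℂ) ^ k * p (0 + k + 1) * e (m - k)
        = ((m + 1 : ℕ) : ℂ) * e (m + 1) := by
      rw [hN m]
      exact Finset.sum_congr rfl fun k _ => by rw [Nat.zero_add]
    rw [h0, Nat.factorial_succ]
    push_cast
    ring
end PShess

section PSnewton

open Finset

noncomputable def esymC {n : ℕ} (μ : Fin n → ℂ) (m : ℕ) : ℂ :=
  ∑ t ∈ Finset.powersetCard m Finset.univ, ∏ i ∈ t, μ i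

lemma esymC_zero {n : ℕ} (μ : Fin n → ℂ) : esymC μ 0 = 1 := by simp [esymC]

lemma aeval_esymmC {n : ℕ} (μ : Fin n → ℂ) (m : ℕ) :
    MvPolynomial.aeval μ (MvPolynomial.esymm (Fin n) ℂ m) = esymC μ m := by
  simp [MvPolynomial.esymm, esymC, map_sum, map_prod]

lemma newtonC {n : ℕ} (μ : Fin n → ℂ) (m : ℕ) :
    ((m + 1 : ℕ) : ℂ) * esymC μ (m + 1) =
      ∑ k ∈ Finset.range (m + 1), (-1) ^ k * (∑ i, μ i ^ (k + 1)) * esymC μ (m - k) := by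
  have h := congrArg (MvPolynomial.aeval μ) (MvPolynomial.mul_esymm_eq_sum (Fin n) ℂ (m + 1))
  simp only [map_mul, map_sum, map_pow, map_neg, map_one, map_natCast, aeval_esymmC,
    MvPolynomial.psum, MvPolynomial.aeval_X] at h
  rw [Finset.sum_filter, Finset.Nat.sum_antidiagonal_eq_sum_range_succ_mk,
    Finset.sum_range_succ, if_neg (lt_irrefl _), add_zero, Finset.mul_sum] at h
  rw [← Finset.sum_range_reflect (fun k => (-1 : ℂ) ^ (m + 1 + 1) *
      (if k < m + 1 then (-1) ^ k * esymC μ k * ∑ i, μ i ^ (m + 1 - k) else 0)) (m + 1)] at h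
  rw [h]
  refine Finset.sum_congr rfl fun k hk => ?_
  have hkm : k ≤ m := by have := Finset.mem_range.mp hk; omega
  have e1 : m + 1 - 1 - k = m - k := by omega
  have e2 : m + 1 - (m - k) = k + 1 := by omega
  rw [e1, if_pos (by omega : m - k < m + 1), e2]
  have hsign : (-1 : ℂ) ^ (m + 1 + 1) * (-1) ^ (m - k) = (-1) ^ k := by
    rw [← pow_add, show m + 1 + 1 + (m - k) = 2 * (m + 1 - k) + k by omega, pow_add, pow_mul]
    norm_num
  linear_combination (esymC μ (m - k) * (∑ i, μ i ^ (k + 1))) * hsign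
end PSnewton

section PStrace

open Matrix Polynomial

section helpers

variable {m' n' : Type} [Fintype m'] [Fintype n'] [DecidableEq m'] [DecidableEq n']

lemma trace_fromBlocks' (A : Matrix m' m' ℂ) (B : Matrix m' n' ℂ) (C : Matrix n' m' ℂ)
    (D : Matrix n' n' ℂ) : (fromBlocks A B C D).trace = A.trace + D.trace := by
  simp [Matrix.trace, Fintype.sum_sum_type, fromBlocks]

lemma fromBlocks_pow (A : Matrix m' m' ℂ) (B : Matrix m' n' ℂ) (D : Matrix n' n' ℂ) (k : ℕ) :
    ∃ B', (fromBlocks A B 0 D) ^ k = fromBlocks (A ^ k) B' 0 (D ^ k) := by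
  induction k with
  | zero => exact ⟨0, by simp [fromBlocks_one]⟩
  | succ k ih =>
    obtain ⟨B', hB'⟩ := ih
    refine ⟨A ^ k * B + B' * D, ?_⟩
    rw [pow_succ, hB', pow_succ, pow_succ, fromBlocks_multiply]
    simp

lemma charpoly_fromBlocks (A : Matrix m' m' ℂ) (B : Matrix m' n' ℂ) (D : Matrix n' n' ℂ) :
    (fromBlocks A B 0 D).charpoly = A.charpoly * D.charpoly := by
  rw [Matrix.charpoly, Matrix.charmatrix_fromBlocks,
    show -((0 : Matrix n' m' ℂ).map ⇑C) = 0 by simp, det_fromBlocks_zero₂₁, Matrix.charpoly,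
    Matrix.charpoly]

lemma charpoly_smul_one (μ : ℂ) : (μ • (1 : Matrix (Fin 1) (Fin 1) ℂ)).charpoly = X - C μ := by
  rw [Matrix.charpoly, det_fin_one]
  simp [charmatrix_apply, Matrix.diagonal_apply]

end helpers

theorem trace_pow_roots : ∀ (N : ℕ) (ι : Type) [Fintype ι] [DecidableEq ι],
    Fintype.card ι = N → ∀ (F : Matrix ι ι ℂ) (k : ℕ),
    (F ^ k).trace = ((F.charpoly.roots).map (· ^ k)).sum := by
  intro N
  induction N with
  | zero =>
    intro ι _ _ hcard F k
    haveI : IsEmpty ι := Fintype.card_eq_zero_iff.mp hcard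
    have h1 : F.charpoly = 1 := (Polynomial.Monic.natDegree_eq_zero F.charpoly_monic).mp
      (by rw [Matrix.charpoly_natDegree_eq_dim, hcard])
    rw [h1, Polynomial.roots_one]
    simp [Matrix.trace_eq_zero_of_isEmpty]
  | succ N IH =>
    intro ι _ _ hcard F k
    haveI : Nonempty ι := Fintype.card_pos_iff.mp (by omega)
    set pb := Pi.basisFun ℂ ι with hpb
    set f : Module.End ℂ (ι → ℂ) := Matrix.toLin pb pb F with hf
    obtain ⟨μ, hμ⟩ := Module.End.exists_eigenvalue f
    obtain ⟨v, hv⟩ := hμ.exists_hasEigenvector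
    set L : Submodule ℂ (ι → ℂ) := Submodule.span ℂ {v} with hLdef
    obtain ⟨W, hLW⟩ := Submodule.exists_isCompl L
    have hL1 : Module.finrank ℂ L = 1 := finrank_span_singleton hv.right
    have hWN : Module.finrank ℂ W = N := by
      have h := Submodule.finrank_add_eq_of_isCompl hLW
      rw [hL1, Module.finrank_pi, hcard] at h
      omega
    let bL : Module.Basis (Fin 1) ℂ L := Module.finBasisOfFinrankEq ℂ L hL1
    let bW : Module.Basis (Fin N) ℂ W := Module.finBasisOfFinrankEq ℂ W hWN
    let b : Module.Basis (Fin 1 ⊕ Fin N) ℂ (ι → ℂ) :=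
      (bL.prod bW).map (Submodule.prodEquivOfIsCompl L W hLW)
    set M := LinearMap.toMatrix b b f with hM
    -- invariance of trace of powers and charpoly
    have hFM : F = LinearMap.toMatrix pb pb f := by rw [hf, LinearMap.toMatrix_toLin]
    have htr : (F ^ k).trace = (M ^ k).trace := by
      rw [hFM, LinearMap.toMatrix_pow, hM, LinearMap.toMatrix_pow,
        ← LinearMap.trace_eq_matrix_trace, ← LinearMap.trace_eq_matrix_trace]
    have hcp : F.charpoly = M.charpoly := by
      rw [hFM, LinearMap.charpoly_toMatrix, hM, LinearMap.charpoly_toMatrix]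
    -- block structure of M
    have hbmem : ∀ j : Fin 1, (b (Sum.inl j) : ι → ℂ) ∈ L := by
      intro j
      have h1 : b (Sum.inl j) = Submodule.prodEquivOfIsCompl L W hLW ((bL.prod bW) (Sum.inl j)) :=
        Module.Basis.map_apply _ _ _
      have h2 : (bL.prod bW) (Sum.inl j) = (bL j, 0) := by
        ext
        · rw [Module.Basis.prod_apply_inl_fst]
        · rw [Module.Basis.prod_apply_inl_snd]
      rw [h1, h2]
      rw [Submodule.coe_prodEquivOfIsCompl']
      simp [(bL j).2]
    have hfL : ∀ x : ι → ℂ, x ∈ L → f x = μ • x := by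
      intro x hx
      obtain ⟨c, rfl⟩ := Submodule.mem_span_singleton.mp hx
      rw [f.map_smul, hv.apply_eq_smul]
      exact smul_comm c μ v
    have hcol : ∀ (j : Fin 1) (i : Fin 1 ⊕ Fin N),
        M i (Sum.inl j) = μ * (if Sum.inl j = i then 1 else 0) := by
      intro j i
      rw [hM, LinearMap.toMatrix_apply, hfL _ (hbmem j)]
      simp [Module.Basis.repr_self, Finsupp.single_apply]
    have hM21 : M.toBlocks₂₁ = 0 := by
      ext i j
      simp [Matrix.toBlocks₂₁, hcol]
    have hM11 : M.toBlocks₁₁ = μ • (1 : Matrix (Fin 1) (Fin 1) ℂ) := by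
      ext i j
      have hij : i = j := Subsingleton.elim _ _
      subst hij
      simp [Matrix.toBlocks₁₁, hcol]
    have hMblocks : M = fromBlocks (μ • (1 : Matrix (Fin 1) (Fin 1) ℂ)) M.toBlocks₁₂ 0
        M.toBlocks₂₂ := by
      rw [← hM11, ← hM21, fromBlocks_toBlocks]
    set D := M.toBlocks₂₂ with hD
    -- trace computation
    obtain ⟨B', hB'⟩ := fromBlocks_pow (μ • (1 : Matrix (Fin 1) (Fin 1) ℂ)) M.toBlocks₁₂ D k
    have htrM : (M ^ k).trace = μ ^ k + (D ^ k).trace := by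
      rw [hMblocks, hB', trace_fromBlocks', _root_.smul_pow, one_pow, Matrix.trace_smul,
        Matrix.trace_one]
      simp
    -- charpoly computation
    have hcpM : F.charpoly = (X - C μ) * D.charpoly := by
      rw [hcp, hMblocks, charpoly_fromBlocks, charpoly_smul_one]
    have hroots : F.charpoly.roots = μ ::ₘ D.charpoly.roots := by
      rw [hcpM, Polynomial.roots_mul (mul_ne_zero (X_sub_C_ne_zero μ)
        D.charpoly_monic.ne_zero), Polynomial.roots_X_sub_C]
      rfl
    rw [htr, htrM, hroots, Multiset.map_cons, Multiset.sum_cons,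
      IH (Fin N) (Fintype.card_fin N) D k]
end PStrace

section PSasm

open Matrix Polynomial

noncomputable section

lemma charpolyEval {ι : Type} [Fintype ι] [DecidableEq ι] (F : Matrix ι ι ℂ) (x : ℂ) :
    F.charpoly.eval x = (x • (1 : Matrix ι ι ℂ) - F).det := by
  rw [Matrix.charpoly, _root_.eval_det, matPolyEquiv_charmatrix]
  simp only [Polynomial.eval_sub, Polynomial.eval_X, Polynomial.eval_C]
  congr 1
  rw [Matrix.scalar_apply, Matrix.smul_one_eq_diagonal]

lemma multiset_sum_fin {n : ℕ} (s : Multiset ℂ) (h : s.toList.length = n) (g : ℂ → ℂ) :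
    (s.map g).sum = ∑ i : Fin n, g (s.toList.get (Fin.cast h.symm i)) := by
  conv_lhs => rw [← Multiset.coe_toList s, ← List.ofFn_get s.toList]
  rw [Multiset.map_coe, List.map_ofFn, Multiset.sum_coe, List.sum_ofFn]
  exact Fintype.sum_equiv (finCongr h) _ _ (fun i => rfl)

lemma multiset_prod_fin {n : ℕ} (s : Multiset ℂ) (h : s.toList.length = n) (g : ℂ → ℂ) :
    (s.map g).prod = ∏ i : Fin n, g (s.toList.get (Fin.cast h.symm i)) := by
  conv_lhs => rw [← Multiset.coe_toList s, ← List.ofFn_get s.toList]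
  rw [Multiset.map_coe, List.map_ofFn, Multiset.prod_coe, List.prod_ofFn]
  exact Fintype.prod_equiv (finCongr h) _ _ (fun i => rfl)


lemma prod_expand {n : ℕ} (μ : Fin n → ℂ) (α : ℂ) :
    ∏ i, (1 - α * μ i) = ∑ m ∈ Finset.range (n + 1), (-1) ^ m * esymC μ m * α ^ m := by
  have h : ∀ i ∈ Finset.univ, (1 : ℂ) - α * μ i = -(α * μ i) + 1 := fun i _ => by ring
  rw [Finset.prod_congr rfl h, Finset.prod_add]
  simp only [Finset.prod_const_one, mul_one]
  rw [Finset.sum_powerset, show (Finset.univ : Finset (Fin n)).card = n from by simp]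
  refine Finset.sum_congr rfl fun m hm => ?_
  have hterm : ∀ t ∈ Finset.powersetCard m (Finset.univ : Finset (Fin n)),
      ∏ i ∈ t, -(α * μ i) = ((-1) ^ m * α ^ m) * ∏ i ∈ t, μ i := by
    intro t ht
    have hc : t.card = m := (Finset.mem_powersetCard.mp ht).2
    calc ∏ i ∈ t, -(α * μ i) = ∏ i ∈ t, (-α) * μ i := Finset.prod_congr rfl fun i _ => by ring
      _ = (∏ _i ∈ t, (-α)) * ∏ i ∈ t, μ i := Finset.prod_mul_distrib
      _ = ((-1) ^ m * α ^ m) * ∏ i ∈ t, μ i := by rw [Finset.prod_const, hc, neg_pow]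
  rw [Finset.sum_congr rfl hterm, ← Finset.mul_sum, esymC]
  ring
end

end PSasm

/-- The Plemelj–Smithies coefficient `a_m = (-1)^m det` of the `m × m` matrix whose
`(i,j)` entry (0-indexed) is `Tr(F^{i-j+1})` for `i ≥ j`, `m-1-i` on the superdiagonal,
and `0` above the superdiagonal. -/
noncomputable def plemeljCoeff {n : ℕ} (F : Matrix (Fin n) (Fin n) ℂ) (m : ℕ) : ℂ :=
  (-1) ^ m * Matrix.det (Matrix.of fun i j : Fin m =>
    if (j : ℕ) ≤ (i : ℕ) then Matrix.trace (F ^ ((i : ℕ) - (j : ℕ) + 1))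
    else if (j : ℕ) = (i : ℕ) + 1 then ((m - 1 - (i : ℕ) : ℕ) : ℂ) else 0)

open Matrix Polynomial in
lemma plemelj_eq_hessG {n : ℕ} (F : Matrix (Fin n) (Fin n) ℂ) (p : ℕ → ℂ)
    (hp : ∀ k, Matrix.trace (F ^ k) = p k) (m : ℕ) :
    plemeljCoeff F m = (-1) ^ m * (hessG p 0 m).det := by
  unfold plemeljCoeff
  congr 1
  congr 1
  ext i k
  simp only [hessG, Matrix.of_apply]
  by_cases h0 : (k : ℕ) = 0
  · rw [if_pos (by omega : (k : ℕ) ≤ (i : ℕ)), if_pos h0, hp]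
    congr 1
    omega
  · rw [if_neg h0]
    by_cases h1 : (k : ℕ) ≤ (i : ℕ)
    · rw [if_pos h1, if_pos h1, hp]
    · rw [if_neg h1, if_neg h1]

open Matrix Polynomial in
/-- Plemelj–Smithies formula: `det(I - αF) = ∑_{m=0}^n (a_m/m!) α^m`. -/
theorem stmt_4 {n : ℕ} (F : Matrix (Fin n) (Fin n) ℂ) (α : ℂ) :
    Matrix.det (1 - α • F) =
      ∑ m ∈ Finset.range (n + 1),
        (plemeljCoeff F m / (Nat.factorial m : ℂ)) * α ^ m := by
  classical
  have hmonic := F.charpoly_monic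
  have hsplits : F.charpoly.Splits := IsAlgClosed.splits F.charpoly
  have hdeg : F.charpoly.natDegree = n := by
    rw [Matrix.charpoly_natDegree_eq_dim, Fintype.card_fin]
  have hlen : F.charpoly.roots.toList.length = n := by
    rw [Multiset.length_toList, (Polynomial.splits_iff_card_roots).mp hsplits, hdeg]
  set μ : Fin n → ℂ := fun i => F.charpoly.roots.toList.get (Fin.cast hlen.symm i) with hμ
  have hsum : ∀ g : ℂ → ℂ, (F.charpoly.roots.map g).sum = ∑ i, g (μ i) :=
    fun g => multiset_sum_fin F.charpoly.roots hlen g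
  have hprod : ∀ g : ℂ → ℂ, (F.charpoly.roots.map g).prod = ∏ i, g (μ i) :=
    fun g => multiset_prod_fin F.charpoly.roots hlen g
  have htr : ∀ k, Matrix.trace (F ^ k) = (fun k => ∑ i, μ i ^ k) k := by
    intro k
    rw [trace_pow_roots n (Fin n) (Fintype.card_fin n) F k]
    exact hsum (· ^ k)
  have hdet : (1 - α • F).det = ∏ i, (1 - α * μ i) := by
    by_cases hα : α = 0
    · subst hα
      simp
    · have h1 : (1 : Matrix (Fin n) (Fin n) ℂ) - α • F
          = α • (α⁻¹ • (1 : Matrix (Fin n) (Fin n) ℂ) - F) := by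
        rw [smul_sub, smul_smul, mul_inv_cancel₀ hα, one_smul]
      rw [h1, Matrix.det_smul, Fintype.card_fin, ← charpolyEval F α⁻¹]
      have h3 : F.charpoly.eval α⁻¹ = ∏ i, (α⁻¹ - μ i) := by
        conv_lhs => rw [hsplits.eq_prod_roots_of_monic hmonic]
        rw [Polynomial.eval_multiset_prod, Multiset.map_map]
        simp only [Function.comp, Polynomial.eval_sub, Polynomial.eval_X, Polynomial.eval_C]
        exact hprod (fun r => α⁻¹ - r)
      rw [h3, show α ^ n = ∏ _i : Fin n, α from by
        rw [Finset.prod_const, Finset.card_univ, Fintype.card_fin], ← Finset.prod_mul_distrib]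
      exact Finset.prod_congr rfl fun i _ => by rw [mul_sub, mul_inv_cancel₀ hα]
  rw [hdet, prod_expand μ α]
  refine Finset.sum_congr rfl fun m _ => ?_
  have hple : plemeljCoeff F m = (-1) ^ m * (Nat.factorial m : ℂ) * esymC μ m := by
    cases m with
    | zero =>
      unfold plemeljCoeff
      rw [Matrix.det_isEmpty, esymC_zero]
      norm_num
    | succ s =>
      rw [plemelj_eq_hessG F (fun k => ∑ i, μ i ^ k) htr (s + 1)]
      rw [hessG_det (fun k => ∑ i, μ i ^ k) (esymC μ) (esymC_zero μ) (newtonC μ) s 0]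
      have hsum0 : ∑ k ∈ Finset.range (s + 1),
          (-1 : ℂ) ^ k * (∑ i, μ i ^ (0 + k + 1)) * esymC μ (s - k)
          = ((s + 1 : ℕ) : ℂ) * esymC μ (s + 1) := by
        have hc : ∀ k ∈ Finset.range (s + 1), (-1 : ℂ) ^ k * (∑ i, μ i ^ (0 + k + 1)) *
            esymC μ (s - k) = (-1) ^ k * (∑ i, μ i ^ (k + 1)) * esymC μ (s - k) :=
          fun k _ => by rw [Nat.zero_add]
        rw [Finset.sum_congr rfl hc, ← newtonC μ s]
      rw [hsum0, Nat.factorial_succ]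
      push_cast
      ring
  rw [hple]
  have hfac : ((Nat.factorial m : ℕ) : ℂ) ≠ 0 := Nat.cast_ne_zero.mpr (Nat.factorial_ne_zero m)
  field_simp
end

section
/- For 0 ≤ e < 1, ∫_{−π/2}^{π/2} (e cos s)/(1 + e cos s) ds = π − (4/√(1−e²)) · arctan(√((1−e)/(1+e))). -/
open Real

/-- For `0 ≤ e < 1`,
`∫_{-π/2}^{π/2} (e cos s)/(1 + e cos s) ds = π - (4/√(1-e²)) arctan √((1-e)/(1+e))`. -/
theorem stmt_8 (e : ℝ) (h0 : 0 ≤ e) (h1 : e < 1) :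
    ∫ s in (-(Real.pi / 2))..(Real.pi / 2), (e * Real.cos s) / (1 + e * Real.cos s) =
      Real.pi - 4 / Real.sqrt (1 - e ^ 2) * Real.arctan (Real.sqrt ((1 - e) / (1 + e))) := by
  have he1 : (0:ℝ) < 1 + e := by linarith
  have he2 : (0:ℝ) < 1 - e := by linarith
  have hpos : ∀ s : ℝ, 0 < 1 + e * Real.cos s := by
    intro s; nlinarith [Real.neg_one_le_cos s, Real.cos_le_one s]
  set a := Real.sqrt (1 - e) with ha
  set b := Real.sqrt (1 + e) with hb
  have ha0 : 0 < a := Real.sqrt_pos.mpr he2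
  have hb0 : 0 < b := Real.sqrt_pos.mpr he1
  have ha2 : a ^ 2 = 1 - e := Real.sq_sqrt he2.le
  have hb2 : b ^ 2 = 1 + e := Real.sq_sqrt he1.le
  have hsq : Real.sqrt (1 - e ^ 2) = a * b := by
    rw [ha, hb, ← Real.sqrt_mul he2.le]; ring_nf
  have hk : Real.sqrt ((1 - e) / (1 + e)) = a / b := by
    rw [ha, hb, Real.sqrt_div he2.le]
  set k := a / b with hkdef
  set F : ℝ → ℝ := fun s => 2 / (a * b) * Real.arctan (k * Real.tan (s / 2)) with hF
  have hle : -(Real.pi / 2) ≤ Real.pi / 2 := by linarith [Real.pi_pos]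
  have hderiv : ∀ s ∈ Set.uIcc (-(Real.pi / 2)) (Real.pi / 2),
      HasDerivAt F (1 / (1 + e * Real.cos s)) s := by
    intro s hs
    rw [Set.uIcc_of_le hle] at hs
    have hc : 0 < Real.cos (s / 2) := by
      apply Real.cos_pos_of_mem_Ioo
      constructor
      · nlinarith [hs.1, Real.pi_pos]
      · nlinarith [hs.2, Real.pi_pos]
    have h2 : HasDerivAt (fun x : ℝ => x / 2) (1 / 2) s := (hasDerivAt_id s).div_const 2
    have ht : HasDerivAt (fun x : ℝ => Real.tan (x / 2))
        (1 / Real.cos (s / 2) ^ 2 * (1 / 2)) s :=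
      by have := (Real.hasDerivAt_tan hc.ne').comp s h2; exact this
    have ha' : HasDerivAt (fun x : ℝ => Real.arctan (k * Real.tan (x / 2)))
        (1 / (1 + (k * Real.tan (s / 2)) ^ 2) * (k * (1 / Real.cos (s / 2) ^ 2 * (1 / 2)))) s :=
      (Real.hasDerivAt_arctan _).comp s (ht.const_mul k)
    have hd := ha'.const_mul (2 / (a * b))
    refine HasDerivAt.congr_deriv hd ?_
    have hts : Real.tan (s / 2) = Real.sin (s / 2) / Real.cos (s / 2) := Real.tan_eq_sin_div_cos _
    have hcs : Real.cos s = Real.cos (s / 2) ^ 2 - Real.sin (s / 2) ^ 2 := by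
      have h := Real.cos_two_mul (s / 2)
      have h2 : 2 * (s / 2) = s := by ring
      rw [h2] at h
      nlinarith [Real.sin_sq_add_cos_sq (s / 2)]
    set c := Real.cos (s / 2)
    set S := Real.sin (s / 2)
    have hcS : c ^ 2 + S ^ 2 = 1 := by
      rw [add_comm]; exact Real.sin_sq_add_cos_sq _
    have hden : 1 + e * Real.cos s = b ^ 2 * c ^ 2 + a ^ 2 * S ^ 2 := by
      rw [hcs, ha2, hb2]; ring_nf; nlinarith [hcS]
    rw [hts, hkdef, hden]
    have h1 : b ^ 2 * c ^ 2 + a ^ 2 * S ^ 2 > 0 := by positivity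
    field_simp
  have hcont : IntervalIntegrable (fun s => 1 / (1 + e * Real.cos s)) MeasureTheory.volume
      (-(Real.pi / 2)) (Real.pi / 2) := by
    apply Continuous.intervalIntegrable
    exact continuous_const.div (by continuity) fun s => (hpos s).ne'
  have hint := intervalIntegral.integral_eq_sub_of_hasDerivAt hderiv hcont
  have hFval : F (Real.pi / 2) - F (-(Real.pi / 2)) = 4 / (a * b) * Real.arctan k := by
    simp only [hF]
    rw [show Real.pi / 2 / 2 = Real.pi / 4 by ring,
        show -(Real.pi / 2) / 2 = -(Real.pi / 4) by ring,
        Real.tan_neg, Real.tan_pi_div_four]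
    rw [mul_one, mul_neg_one, Real.arctan_neg]
    ring
  have hsplit : ∀ s : ℝ, e * Real.cos s / (1 + e * Real.cos s)
      = 1 - 1 / (1 + e * Real.cos s) := by
    intro s
    have hne := (hpos s).ne'
    field_simp
    ring
  have h1int : IntervalIntegrable (fun _ : ℝ => (1:ℝ)) MeasureTheory.volume
      (-(Real.pi / 2)) (Real.pi / 2) := intervalIntegrable_const
  calc ∫ s in (-(Real.pi / 2))..(Real.pi / 2), e * Real.cos s / (1 + e * Real.cos s)
      = ∫ s in (-(Real.pi / 2))..(Real.pi / 2), (1 - 1 / (1 + e * Real.cos s)) := by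
        apply intervalIntegral.integral_congr
        intro s _; exact hsplit s
    _ = (∫ _ in (-(Real.pi / 2))..(Real.pi / 2), (1:ℝ))
        - ∫ s in (-(Real.pi / 2))..(Real.pi / 2), 1 / (1 + e * Real.cos s) :=
        intervalIntegral.integral_sub h1int hcont
    _ = Real.pi - 4 / Real.sqrt (1 - e ^ 2) * Real.arctan (Real.sqrt ((1 - e) / (1 + e))) := by
        rw [hint, hFval, hsq, hk, intervalIntegral.integral_const]
        simp only [smul_eq_mul, mul_one]
        ring
end

section
/- Let F be a compact operator (or an n×n matrix) on a Hilbert space, and suppose 1/λ₀ is a nonzero eigenvalue of F with algebraic multiplicity k. Then λ₀ is a zero of the entire function λ ↦ det(id − λF) of order exactly k. (Matrix version: for F ∈ M(n,ℂ), λ₀ is a zero of det(I − λF) of order k iff 1/λ₀ is an eigenvalue of F of algebraic multiplicity k.) -/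
open Polynomial

lemma aux_factor (μ l : ℂ) (hl : l ≠ 0) :
    rootMultiplicity l (1 - C μ * X) = rootMultiplicity l⁻¹ (X - C μ) := by
  rw [rootMultiplicity_X_sub_C]
  by_cases hμ : μ = 0
  · subst hμ
    rw [if_neg (inv_ne_zero hl)]
    simp [rootMultiplicity_eq_zero]
  · have hfac : (1 - C μ * X) = C (-μ) * (X - C μ⁻¹) := by
      rw [mul_sub, ← C_mul, neg_mul, mul_inv_cancel₀ hμ]; ring_nf; simp [map_neg]; ring
    rw [hfac, rootMultiplicity_mul (mul_ne_zero (by simpa using hμ) (X_sub_C_ne_zero _)),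
      rootMultiplicity_eq_zero (by simp [hμ]), rootMultiplicity_X_sub_C]
    have : (l = μ⁻¹) ↔ (l⁻¹ = μ) := by
      constructor
      · rintro rfl; simp
      · rintro rfl; simp
    simp [this]

lemma reverse_prod_X_sub_C (s : Multiset ℂ) :
    ((s.map (fun μ => X - C μ)).prod).reverse = (s.map (fun μ => 1 - C μ * X)).prod := by
  induction s using Multiset.induction with
  | empty => simp [reverse]
  | cons μ s ih =>
    simp only [Multiset.map_cons, Multiset.prod_cons, reverse_mul_of_domain, ih]
    congr 1
    rw [reverse, natDegree_X_sub_C, reflect_sub, ← pow_one (X : ℂ[X]),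
      reflect_monomial, reflect_C]
    simp [revAt_le]

lemma prod_one_sub_ne_zero (s : Multiset ℂ) :
    (s.map (fun μ => 1 - C μ * X)).prod ≠ 0 := fun h => by
  have := congrArg (eval 0) h
  simp [eval_multiset_prod, Multiset.map_map] at this

lemma rm_prod (l : ℂ) (hl : l ≠ 0) (s : Multiset ℂ) :
    rootMultiplicity l ((s.map (fun μ => 1 - C μ * X)).prod) =
      rootMultiplicity l⁻¹ ((s.map (fun μ => X - C μ)).prod) := by
  induction s using Multiset.induction with
  | empty =>
    simp only [Multiset.map_zero, Multiset.prod_zero, ← C_1, rootMultiplicity_C]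
  | cons μ s ih =>
    simp only [Multiset.map_cons, Multiset.prod_cons]
    rw [rootMultiplicity_mul (mul_ne_zero
        (fun h => by simpa using congrArg (eval 0) h) (prod_one_sub_ne_zero s)),
      rootMultiplicity_mul (mul_ne_zero (X_sub_C_ne_zero _)
        (Monic.ne_zero (monic_multiset_prod_of_monic _ _ (fun a _ => monic_X_sub_C a)))),
      aux_factor μ l hl, ih]

/-- Matrix version of the order-of-vanishing statement: for `F ∈ M(n,ℂ)` and `λ₀ ≠ 0`,
the order of `λ₀` as a zero of `λ ↦ det(I - λF)` equals the algebraic multiplicity of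
`1/λ₀` as an eigenvalue of `F` (the multiplicity of `1/λ₀` as a root of the
characteristic polynomial). -/
theorem stmt_15 {n : ℕ} (F : Matrix (Fin n) (Fin n) ℂ) (l : ℂ) (hl : l ≠ 0) :
    Polynomial.rootMultiplicity l
        (Matrix.det ((1 : Matrix (Fin n) (Fin n) (Polynomial ℂ)) -
          (Polynomial.X : Polynomial ℂ) • F.map Polynomial.C)) =
      Polynomial.rootMultiplicity l⁻¹ (Matrix.charpoly F) := by
  have h1 : Matrix.det ((1 : Matrix (Fin n) (Fin n) (Polynomial ℂ)) -
      (Polynomial.X : Polynomial ℂ) • F.map Polynomial.C) = (Matrix.charpoly F).reverse :=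
    (Matrix.reverse_charpoly F).symm
  have hsplit := (IsAlgClosed.splits (Matrix.charpoly F)).eq_prod_roots_of_monic
    (Matrix.charpoly_monic F)
  rw [h1]
  conv_lhs => rw [hsplit]
  conv_rhs => rw [hsplit]
  rw [reverse_prod_X_sub_C, rm_prod l hl]
end

section
/- Let S̄ ∈ O(n), ω ∈ ℂ not an eigenvalue of S̄, and R : [0,T] → S(n) continuous. With γ₀(t) = [[I_n,0],[tI_n,I_n]], M = diag(S̄,S̄)·γ₀(T), and G₁ = J∫_0^T γ₀(t)ᵀ [[0,0],[0,R(t)]] γ₀(t) dt · M(M − ωI_{2n})^{−1}, one has Tr(G₁) = ω · Tr( T ∫_0^T R(t)dt · S̄ᵀ (I_n − ω S̄ᵀ)^{−2} ). -/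
open Matrix

attribute [local instance] Matrix.normedAddCommGroup Matrix.normedSpace

section Aux

variable {p q : Type*} [Fintype p] [Fintype q]

noncomputable def entryCLM (i : p) (j : q) : Matrix p q ℝ →L[ℝ] ℝ :=
  LinearMap.toContinuousLinearMap
    { toFun := fun X => X i j
      map_add' := fun _ _ => rfl
      map_smul' := fun _ _ => rfl }

lemma integral_entry (f : ℝ → Matrix p q ℝ) (hf : Continuous f) (a b : ℝ) (i : p) (j : q) :
    (∫ t in a..b, f t) i j = ∫ t in a..b, f t i j := by
  have h := (entryCLM i j).intervalIntegral_comp_comm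
    (μ := MeasureTheory.volume) (hf.intervalIntegrable a b)
  exact h.symm

lemma integral_fromBlocks
    (f : ℝ → Matrix p p ℝ) (g : ℝ → Matrix p q ℝ) (h : ℝ → Matrix q p ℝ)
    (k : ℝ → Matrix q q ℝ)
    (hf : Continuous f) (hg : Continuous g) (hh : Continuous h) (hk : Continuous k)
    (a b : ℝ) :
    (∫ t in a..b, Matrix.fromBlocks (f t) (g t) (h t) (k t)) =
      Matrix.fromBlocks (∫ t in a..b, f t) (∫ t in a..b, g t)
        (∫ t in a..b, h t) (∫ t in a..b, k t) := by
  have hF : Continuous fun t => Matrix.fromBlocks (f t) (g t) (h t) (k t) := by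
    apply continuous_matrix
    rintro (i | i) (j | j)
    · simpa [Matrix.fromBlocks] using hf.matrix_elem i j
    · simpa [Matrix.fromBlocks] using hg.matrix_elem i j
    · simpa [Matrix.fromBlocks] using hh.matrix_elem i j
    · simpa [Matrix.fromBlocks] using hk.matrix_elem i j
  ext i j
  rcases i with i | i <;> rcases j with j | j <;>
    rw [integral_entry _ hF] <;>
    simp [Matrix.fromBlocks,
      integral_entry f hf, integral_entry g hg, integral_entry h hh, integral_entry k hk]

lemma trace_fromBlocks'_s17 {R : Type*} [AddCommMonoid R]
    (A : Matrix p p R) (B : Matrix p q R) (C : Matrix q p R) (D : Matrix q q R) :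
    Matrix.trace (Matrix.fromBlocks A B C D) = Matrix.trace A + Matrix.trace D := by
  simp [Matrix.trace, Matrix.diag, Fintype.sum_sum_type, Matrix.fromBlocks]

end Aux

/-- Let `S̄ ∈ O(n)`, `ω ∈ ℂ`, `R : [0,T] → S(n)` continuous. With
`γ₀(t) = [[I,0],[tI,I]]`, `M = diag(S̄,S̄) γ₀(T)` and
`G₁ = J ∫_0^T γ₀ᵀ [[0,0],[0,R]] γ₀ dt ⋅ M (M - ωI)⁻¹`, if `ω` is not an eigenvalue of
`M` then `Tr G₁ = ω Tr( T ∫_0^T R dt ⋅ S̄ᵀ (I - ω S̄ᵀ)⁻² )`. -/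
theorem stmt_17 {n : ℕ} (T : ℝ) (ω : ℂ)
    (S : Matrix (Fin n) (Fin n) ℝ) (hS : Sᵀ * S = 1)
    (R : ℝ → Matrix (Fin n) (Fin n) ℝ)
    (hR : Continuous R) (hRsym : ∀ t, (R t).IsSymm)
    (J : Matrix (Fin n ⊕ Fin n) (Fin n ⊕ Fin n) ℝ)
    (hJ : J = Matrix.fromBlocks 0 (-1) 1 0)
    (γ : ℝ → Matrix (Fin n ⊕ Fin n) (Fin n ⊕ Fin n) ℝ)
    (hγ : γ = fun t => Matrix.fromBlocks 1 0 (t • 1) 1)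
    (M : Matrix (Fin n ⊕ Fin n) (Fin n ⊕ Fin n) ℂ)
    (hM : M = (Matrix.fromBlocks S 0 0 S * γ T).map (algebraMap ℝ ℂ))
    (hω : IsUnit (M - ω • 1))
    (G₁ : Matrix (Fin n ⊕ Fin n) (Fin n ⊕ Fin n) ℂ)
    (hG₁ : G₁ = (J * ∫ t in (0 : ℝ)..T,
        (γ t)ᵀ * Matrix.fromBlocks 0 0 0 (R t) * γ t).map (algebraMap ℝ ℂ) *
      (M * (M - ω • 1)⁻¹)) :
    Matrix.trace G₁ =
      ω * Matrix.trace ((T : ℂ) •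
        ((∫ t in (0 : ℝ)..T, R t).map (algebraMap ℝ ℂ) *
          ((S.map (algebraMap ℝ ℂ))ᵀ *
            ((1 - ω • (S.map (algebraMap ℝ ℂ))ᵀ)⁻¹ *
              (1 - ω • (S.map (algebraMap ℝ ℂ))ᵀ)⁻¹)))) := by

  classical
  set Sc : Matrix (Fin n) (Fin n) ℂ := S.map (algebraMap ℝ ℂ) with hScdef
  have hmapone : (1 : Matrix (Fin n) (Fin n) ℝ).map (algebraMap ℝ ℂ) = 1 :=
    Matrix.map_one _ (map_zero _) (map_one _)
  have hScST : Scᵀ * Sc = 1 := by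
    rw [hScdef, ← Matrix.transpose_map, ← Matrix.map_mul, hS]
    exact hmapone
  have hmapsmul : ∀ (c : ℝ) (A : Matrix (Fin n) (Fin n) ℝ),
      (c • A).map (algebraMap ℝ ℂ) = (c : ℂ) • A.map (algebraMap ℝ ℂ) := by
    intro c A
    ext i j
    simp [Matrix.map_apply, Matrix.smul_apply, smul_eq_mul]
  have hM' : M = Matrix.fromBlocks Sc 0 ((T : ℂ) • Sc) Sc := by
    rw [hM, hγ]
    have : Matrix.fromBlocks S 0 0 S * Matrix.fromBlocks 1 0 (T • (1 : Matrix (Fin n) (Fin n) ℝ)) 1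
        = Matrix.fromBlocks S 0 (T • S) S := by
      rw [Matrix.fromBlocks_multiply]
      simp [Matrix.mul_smul]
    rw [this, Matrix.fromBlocks_map, hmapsmul]
    simp [hScdef]
  have hMω : M - ω • 1 = Matrix.fromBlocks (Sc - ω • 1) 0 ((T : ℂ) • Sc) (Sc - ω • 1) := by
    rw [hM', ← Matrix.fromBlocks_one (l := Fin n) (m := Fin n) (α := ℂ),
      Matrix.fromBlocks_smul]
    simp [sub_eq_add_neg, Matrix.fromBlocks_neg, Matrix.fromBlocks_add]
  have hdetM : IsUnit (M - ω • 1).det := (Matrix.isUnit_iff_isUnit_det _).mp hω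
  have hdet : IsUnit (Sc - ω • 1).det := by
    rw [hMω, Matrix.det_fromBlocks_zero₁₂] at hdetM
    exact isUnit_of_mul_isUnit_left hdetM
  set E : Matrix (Fin n) (Fin n) ℂ := (Sc - ω • 1)⁻¹ with hEdef
  have hE1 : (Sc - ω • 1) * E = 1 := Matrix.mul_nonsing_inv _ hdet
  have hE2 : E * (Sc - ω • 1) = 1 := Matrix.nonsing_inv_mul _ hdet
  have hswap : Sc * (Sc - ω • 1) = (Sc - ω • 1) * Sc := by
    simp [Matrix.mul_sub, Matrix.sub_mul, Matrix.mul_smul, Matrix.smul_mul]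
  have hcom : Sc * E = E * Sc := by
    calc Sc * E = (E * (Sc - ω • 1)) * (Sc * E) := by rw [hE2, one_mul]
      _ = E * ((Sc - ω • 1) * Sc * E) := by simp only [mul_assoc]
      _ = E * (Sc * ((Sc - ω • 1) * E)) := by rw [← hswap]; simp only [mul_assoc]
      _ = E * Sc := by rw [hE1, mul_one]
  have hTL : Sc * E * (Sc - ω • 1) = Sc := by rw [mul_assoc, hE2, mul_one]
  have key : Matrix.fromBlocks (Sc * E) 0 (-(((T : ℂ) * ω) • (Sc * (E * E)))) (Sc * E)
      * (M - ω • 1) = M := by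
    rw [hMω, hM', Matrix.fromBlocks_multiply]
    have hBL : -(((T : ℂ) * ω) • (Sc * (E * E))) * (Sc - ω • 1) + Sc * E * ((T : ℂ) • Sc)
        = (T : ℂ) • Sc := by
      have h1 : (Sc * (E * E)) * (Sc - ω • 1) = Sc * E := by
        rw [mul_assoc, mul_assoc, hE2, mul_one]
      have h2 : Sc * E * Sc - ω • (Sc * E) = Sc := by
        have h3 := hTL
        rw [Matrix.mul_sub, Matrix.mul_smul, mul_one] at h3
        exact h3
      rw [Matrix.neg_mul, Matrix.smul_mul, h1, Matrix.mul_smul]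
      have h4 : -(((T : ℂ) * ω) • (Sc * E)) + (T : ℂ) • (Sc * E * Sc)
          = (T : ℂ) • (Sc * E * Sc - ω • (Sc * E)) := by
        rw [smul_sub, smul_smul]
        abel
      rw [h4, h2]
    simp only [hTL, hBL, Matrix.zero_mul, Matrix.mul_zero, add_zero, zero_add]
  have hN : M * (M - ω • 1)⁻¹
      = Matrix.fromBlocks (Sc * E) 0 (-(((T : ℂ) * ω) • (Sc * (E * E)))) (Sc * E) := by
    calc M * (M - ω • 1)⁻¹
        = (Matrix.fromBlocks (Sc * E) 0 (-(((T : ℂ) * ω) • (Sc * (E * E)))) (Sc * E)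
            * (M - ω • 1)) * (M - ω • 1)⁻¹ := by rw [key]
      _ = _ := by rw [mul_assoc, Matrix.mul_nonsing_inv _ hdetM, mul_one]
  have hintegrand : ∀ t : ℝ, (γ t)ᵀ * Matrix.fromBlocks 0 0 0 (R t) * γ t
      = Matrix.fromBlocks ((t * t) • R t) (t • R t) (t • R t) (R t) := by
    intro t
    rw [hγ]
    simp [Matrix.fromBlocks_transpose, Matrix.fromBlocks_multiply, Matrix.smul_mul,
      Matrix.mul_smul, smul_smul, Matrix.transpose_smul]
  set I2 : Matrix (Fin n) (Fin n) ℝ := ∫ t in (0 : ℝ)..T, (t * t) • R t with hI2def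
  set I1 : Matrix (Fin n) (Fin n) ℝ := ∫ t in (0 : ℝ)..T, t • R t with hI1def
  set I0 : Matrix (Fin n) (Fin n) ℝ := ∫ t in (0 : ℝ)..T, R t with hI0def
  have hI : (∫ t in (0 : ℝ)..T, (γ t)ᵀ * Matrix.fromBlocks 0 0 0 (R t) * γ t)
      = Matrix.fromBlocks I2 I1 I1 I0 := by
    simp_rw [hintegrand]
    exact integral_fromBlocks _ _ _ _
      ((continuous_id.mul continuous_id).smul hR) (continuous_id.smul hR)
      (continuous_id.smul hR) hR 0 T
  have hJI : J * (∫ t in (0 : ℝ)..T, (γ t)ᵀ * Matrix.fromBlocks 0 0 0 (R t) * γ t)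
      = Matrix.fromBlocks (-I1) (-I0) I2 I1 := by
    rw [hI, hJ, Matrix.fromBlocks_multiply]
    simp
  have hmapneg : ∀ A : Matrix (Fin n) (Fin n) ℝ,
      (-A).map (algebraMap ℝ ℂ) = -(A.map (algebraMap ℝ ℂ)) := by
    intro A; ext i j; simp
  have hGform : G₁ = Matrix.fromBlocks
      (-(I1.map (algebraMap ℝ ℂ)) * (Sc * E)
        + -(I0.map (algebraMap ℝ ℂ)) * -(((T : ℂ) * ω) • (Sc * (E * E))))
      (-(I1.map (algebraMap ℝ ℂ)) * 0 + -(I0.map (algebraMap ℝ ℂ)) * (Sc * E))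
      ((I2.map (algebraMap ℝ ℂ)) * (Sc * E)
        + (I1.map (algebraMap ℝ ℂ)) * -(((T : ℂ) * ω) • (Sc * (E * E))))
      ((I2.map (algebraMap ℝ ℂ)) * 0 + (I1.map (algebraMap ℝ ℂ)) * (Sc * E)) := by
    rw [hG₁, hJI, hN, Matrix.fromBlocks_map, hmapneg, hmapneg, Matrix.fromBlocks_multiply]
  rw [hGform, trace_fromBlocks'_s17]
  have hFinv : ((1 : Matrix (Fin n) (Fin n) ℂ) - ω • Scᵀ)⁻¹ = Sc * E := by
    have hF : (1 : Matrix (Fin n) (Fin n) ℂ) - ω • Scᵀ = Scᵀ * (Sc - ω • 1) := by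
      rw [Matrix.mul_sub, hScST, Matrix.mul_smul, mul_one]
    rw [hF, Matrix.mul_inv_rev, Matrix.inv_eq_right_inv hScST, ← hEdef, ← hcom]
  have hkey2 : Scᵀ * ((Sc * E) * (Sc * E)) = Sc * (E * E) := by
    calc Scᵀ * ((Sc * E) * (Sc * E)) = (Scᵀ * Sc) * (E * (Sc * E)) := by
          simp only [mul_assoc]
      _ = E * (Sc * E) := by rw [hScST, one_mul]
      _ = (E * Sc) * E := by rw [mul_assoc]
      _ = (Sc * E) * E := by rw [hcom]
      _ = Sc * (E * E) := by rw [mul_assoc]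
  rw [hFinv, hkey2]
  simp only [Matrix.mul_zero, zero_add, Matrix.neg_mul, Matrix.mul_neg, neg_neg,
    Matrix.trace_add, Matrix.trace_neg, Matrix.trace_smul, Matrix.mul_smul,
    smul_eq_mul]
  ring
end

section
/- Let ν ∈ ℝ, α ∈ ℝ with cosh ν ≠ cos α. Then the symmetric limit lim_{N→∞} Σ_{|k|≤N} [1/(2kπ + √−1 ν − α) + 1/(2kπ − √−1 ν − α)] = −2e^ν sin α / ((cos α − e^ν)² + sin² α). -/
open Filter Finset Topology

lemma norm_prod_one_add_sub_one_le {ι : Type*} (s : Finset ι) (w : ι → ℂ) :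
    ‖(∏ i ∈ s, (1 + w i)) - 1‖ ≤ (∏ i ∈ s, (1 + ‖w i‖)) - 1 := by
  induction s using Finset.cons_induction with
  | empty => simp
  | cons a s ha ih =>
    rw [Finset.prod_cons, Finset.prod_cons]
    have hQ : ‖∏ i ∈ s, (1 + w i)‖ ≤ ∏ i ∈ s, (1 + ‖w i‖) := by
      rw [norm_prod]
      exact Finset.prod_le_prod (fun i _ => norm_nonneg _)
        (fun i _ => (norm_add_le 1 (w i)).trans (by simp))
    have hX : (1 + w a) * ∏ i ∈ s, (1 + w i) - 1
        = ((∏ i ∈ s, (1 + w i)) - 1) + w a * ∏ i ∈ s, (1 + w i) := by ring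
    rw [hX]
    calc ‖((∏ i ∈ s, (1 + w i)) - 1) + w a * ∏ i ∈ s, (1 + w i)‖
        ≤ ‖(∏ i ∈ s, (1 + w i)) - 1‖ + ‖w a‖ * ‖∏ i ∈ s, (1 + w i)‖ := by
          refine (norm_add_le _ _).trans ?_
          rw [norm_mul]
      _ ≤ ((∏ i ∈ s, (1 + ‖w i‖)) - 1) + ‖w a‖ * ∏ i ∈ s, (1 + ‖w i‖) := by
          gcongr
      _ = (1 + ‖w a‖) * ∏ i ∈ s, (1 + ‖w i‖) - 1 := by ring

noncomputable def eulerProd (N : ℕ) (z : ℂ) : ℂ :=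
  (Real.pi : ℂ) * z * ∏ j ∈ Finset.range N, (1 - z ^ 2 / ((j : ℂ) + 1) ^ 2)

lemma quot_norm_le {R : ℝ} (x : ℂ) (hx : ‖x‖ ≤ R) (j : ℕ) :
    ‖x ^ 2 / ((j : ℂ) + 1) ^ 2‖ ≤ R ^ 2 / ((j : ℝ) + 1) ^ 2 := by
  have hnorm : ‖x ^ 2 / ((j : ℂ) + 1) ^ 2‖ = ‖x‖ ^ 2 / ((j : ℝ) + 1) ^ 2 := by
    rw [norm_div, norm_pow, norm_pow]
    congr 2
    have : ((j : ℂ) + 1) = ((j + 1 : ℕ) : ℂ) := by push_cast; ring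
    rw [this, Complex.norm_natCast]
    push_cast; ring
  rw [hnorm]
  gcongr

lemma factor_norm_le {R : ℝ} (x : ℂ) (hx : ‖x‖ ≤ R) (j : ℕ) :
    ‖1 - x ^ 2 / ((j : ℂ) + 1) ^ 2‖ ≤ 1 + R ^ 2 / ((j : ℝ) + 1) ^ 2 := by
  calc ‖1 - x ^ 2 / ((j : ℂ) + 1) ^ 2‖ ≤ ‖(1:ℂ)‖ + ‖x ^ 2 / ((j : ℂ) + 1) ^ 2‖ := norm_sub_le _ _
    _ ≤ 1 + R ^ 2 / ((j : ℝ) + 1) ^ 2 := by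
        rw [norm_one]
        gcongr
        exact quot_norm_le x hx j

lemma summable_u (R : ℝ) : Summable (fun j : ℕ => R ^ 2 / ((j : ℝ) + 1) ^ 2) := by
  have h1 : Summable (fun n : ℕ => 1 / ((n : ℝ)) ^ 2) :=
    Real.summable_one_div_nat_pow.mpr one_lt_two
  have h2 : Summable (fun n : ℕ => 1 / ((n : ℝ) + 1) ^ 2) := by
    have := (summable_nat_add_iff (f := fun n : ℕ => 1 / ((n : ℝ)) ^ 2) 1).2 h1
    refine this.congr fun n => ?_
    push_cast
    ring
  refine (h2.mul_left (R ^ 2)).congr fun n => ?_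
  field_simp

lemma eulerProd_uniformCauchy (z₀ : ℂ) :
    UniformCauchySeqOn eulerProd atTop (Metric.ball z₀ 1) := by
  set R : ℝ := ‖z₀‖ + 1 with hR
  have hR0 : 0 < R := by positivity
  set u : ℕ → ℝ := fun j => R ^ 2 / ((j : ℝ) + 1) ^ 2 with hu_def
  have hu_nonneg : ∀ j, 0 ≤ u j := fun j => by positivity
  have hu : Summable u := summable_u R
  set t : ℕ → ℝ := fun m => ∑' k, u (k + m) with ht_def
  set C : ℝ := Real.pi * R * Real.exp (∑' j, u j) with hC
  have hprod_le_exp : ∀ (s : Finset ℕ), (∏ j ∈ s, (1 + u j)) ≤ Real.exp (∑ j ∈ s, u j) := by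
    intro s
    calc (∏ j ∈ s, (1 + u j)) ≤ ∏ j ∈ s, Real.exp (u j) :=
          Finset.prod_le_prod (fun j _ => by positivity)
            (fun j _ => by rw [add_comm]; exact Real.add_one_le_exp (u j))
      _ = Real.exp (∑ j ∈ s, u j) := (Real.exp_sum s u).symm
  have key : ∀ m n : ℕ, m ≤ n → ∀ x ∈ Metric.ball z₀ 1,
      ‖eulerProd m x - eulerProd n x‖ ≤ C * (Real.exp (t m) - 1) := by
    intro m n hmn x hx
    have hxR : ‖x‖ ≤ R := by
      have h1 : ‖x - z₀‖ < 1 := by simpa [Metric.mem_ball, dist_eq_norm] using hx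
      have h2 : ‖x‖ = ‖z₀ + (x - z₀)‖ := by ring_nf
      rw [h2]
      calc ‖z₀ + (x - z₀)‖ ≤ ‖z₀‖ + ‖x - z₀‖ := norm_add_le _ _
        _ ≤ R := by rw [hR]; linarith
    set g : ℕ → ℂ := fun j => 1 - x ^ 2 / ((j : ℂ) + 1) ^ 2 with hg
    have hsplit : eulerProd m x - eulerProd n x
        = ((Real.pi : ℂ) * x * ∏ j ∈ Finset.range m, g j) * (1 - ∏ j ∈ Finset.Ico m n, g j) := by
      unfold eulerProd
      rw [← Finset.prod_range_mul_prod_Ico g hmn]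
      ring
    have hg_norm : ∀ j, ‖g j‖ ≤ 1 + u j := fun j => factor_norm_le x hxR j
    have hhead : ‖(Real.pi : ℂ) * x * ∏ j ∈ Finset.range m, g j‖ ≤ C := by
      rw [norm_mul, norm_mul, Complex.norm_real, Real.norm_eq_abs,
        abs_of_nonneg Real.pi_nonneg, hC]
      have h1 : ‖∏ j ∈ Finset.range m, g j‖ ≤ Real.exp (∑' j, u j) := by
        rw [norm_prod]
        calc (∏ j ∈ Finset.range m, ‖g j‖) ≤ ∏ j ∈ Finset.range m, (1 + u j) :=
              Finset.prod_le_prod (fun j _ => norm_nonneg _) (fun j _ => hg_norm j)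
          _ ≤ Real.exp (∑ j ∈ Finset.range m, u j) := hprod_le_exp _
          _ ≤ Real.exp (∑' j, u j) := by
              apply Real.exp_le_exp.mpr
              exact Summable.sum_le_tsum _ (fun i _ => hu_nonneg i) hu
      exact mul_le_mul (by gcongr) h1 (norm_nonneg _) (by positivity)
    have htail : ‖1 - ∏ j ∈ Finset.Ico m n, g j‖ ≤ Real.exp (t m) - 1 := by
      have hw : (∏ j ∈ Finset.Ico m n, g j)
          = ∏ j ∈ Finset.Ico m n, (1 + (-(x ^ 2 / ((j : ℂ) + 1) ^ 2))) :=
        Finset.prod_congr rfl (fun j _ => by ring)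
      rw [norm_sub_rev, hw]
      have step1 := _root_.norm_prod_one_add_sub_one_le (Finset.Ico m n)
        (fun j => -(x ^ 2 / ((j : ℂ) + 1) ^ 2))
      have step2 : (∏ j ∈ Finset.Ico m n, (1 + ‖-(x ^ 2 / ((j : ℂ) + 1) ^ 2)‖))
          ≤ ∏ j ∈ Finset.Ico m n, (1 + u j) :=
        Finset.prod_le_prod (fun j _ => by positivity)
          (fun j _ => by rw [norm_neg]; exact add_le_add le_rfl (quot_norm_le x hxR j))
      have step3 := hprod_le_exp (Finset.Ico m n)
      have step4 : Real.exp (∑ j ∈ Finset.Ico m n, u j) ≤ Real.exp (t m) := by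
        apply Real.exp_le_exp.mpr
        rw [Finset.sum_Ico_eq_sum_range]
        have hsum : Summable (fun k => u (k + m)) := (summable_nat_add_iff m).2 hu
        have h5 : ∑ k ∈ Finset.range (n - m), u (m + k)
            = ∑ k ∈ Finset.range (n - m), u (k + m) :=
          Finset.sum_congr rfl (fun i _ => by rw [add_comm])
        rw [h5]
        exact Summable.sum_le_tsum _ (fun i _ => hu_nonneg _) hsum
      linarith
    calc ‖eulerProd m x - eulerProd n x‖
        = ‖(Real.pi : ℂ) * x * ∏ j ∈ Finset.range m, g j‖
            * ‖1 - ∏ j ∈ Finset.Ico m n, g j‖ := by rw [hsplit, norm_mul]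
      _ ≤ C * (Real.exp (t m) - 1) :=
          mul_le_mul hhead htail (norm_nonneg _) (by positivity)
  have htt : Tendsto (fun m => C * (Real.exp (t m) - 1)) atTop (𝓝 0) := by
    have h0 : Tendsto t atTop (𝓝 0) := tendsto_sum_nat_add u
    have h1 : Tendsto (fun m => Real.exp (t m) - 1) atTop (𝓝 0) := by
      have := ((Real.continuous_exp.tendsto 0).comp h0).sub_const 1
      simpa using this
    simpa using h1.const_mul C
  rw [Metric.uniformCauchySeqOn_iff]
  intro ε hε
  obtain ⟨N, hN⟩ := eventually_atTop.1 (htt.eventually_lt_const hε)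
  refine ⟨N, fun m hm n hn x hx => ?_⟩
  rcases le_total m n with hmn | hmn
  · rw [dist_eq_norm]
    exact lt_of_le_of_lt (key m n hmn x hx) (hN m hm)
  · rw [dist_comm, dist_eq_norm]
    exact lt_of_le_of_lt (key n m hmn x hx) (hN n hn)

lemma factor_ne_zero {z : ℂ} (hz : ∀ k : ℤ, z ≠ (k : ℂ)) (j : ℕ) :
    1 - z ^ 2 / ((j : ℂ) + 1) ^ 2 ≠ 0 := by
  have hj : ((j : ℂ) + 1) ≠ 0 := by
    have h' : ((j + 1 : ℕ) : ℂ) ≠ 0 := Nat.cast_ne_zero.mpr (Nat.succ_ne_zero j)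
    push_cast at h'
    exact h'
  intro heq
  have h2 : (z - ((j : ℂ) + 1)) * (z + ((j : ℂ) + 1)) = 0 := by
    have h3 : z ^ 2 = ((j : ℂ) + 1) ^ 2 := by
      field_simp at heq
      linear_combination -heq
    linear_combination h3
  rcases mul_eq_zero.1 h2 with h | h
  · exact hz ((j : ℤ) + 1) (by rw [sub_eq_zero] at h; rw [h]; push_cast; ring)
  · exact hz (-((j : ℤ) + 1)) (by rw [add_eq_zero_iff_eq_neg] at h; rw [h]; push_cast; ring)

lemma logDeriv_factor {z : ℂ} (hz : ∀ k : ℤ, z ≠ (k : ℂ)) (j : ℕ) :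
    logDeriv (fun x : ℂ => 1 - x ^ 2 / ((j : ℂ) + 1) ^ 2) z
      = 1 / (z - (((j : ℤ) + 1 : ℤ) : ℂ)) + 1 / (z - ((-((j : ℤ) + 1) : ℤ) : ℂ)) := by
  have hj : ((j : ℂ) + 1) ≠ 0 := by
    have h' : ((j + 1 : ℕ) : ℂ) ≠ 0 := Nat.cast_ne_zero.mpr (Nat.succ_ne_zero j)
    push_cast at h'
    exact h'
  have hd : HasDerivAt (fun x : ℂ => 1 - x ^ 2 / ((j : ℂ) + 1) ^ 2)
      (-(2 * z / ((j : ℂ) + 1) ^ 2)) z := by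
    have := ((hasDerivAt_pow 2 z).div_const (((j : ℂ) + 1) ^ 2)).const_sub 1
    simpa using this
  have hne := factor_ne_zero hz j
  have h1 : z - ((j : ℂ) + 1) ≠ 0 := by
    rw [sub_ne_zero]
    intro h; exact hz ((j : ℤ) + 1) (by rw [h]; push_cast; ring)
  have h2 : z + ((j : ℂ) + 1) ≠ 0 := by
    intro h
    rw [add_eq_zero_iff_eq_neg] at h
    exact hz (-((j : ℤ) + 1)) (by rw [h]; push_cast; ring)
  rw [logDeriv_apply, hd.deriv]
  have e1 : (((j : ℤ) + 1 : ℤ) : ℂ) = (j : ℂ) + 1 := by push_cast; ring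
  have e2 : ((-((j : ℤ) + 1) : ℤ) : ℂ) = -((j : ℂ) + 1) := by push_cast; ring
  rw [e1, e2]
  have hmul : (z - ((j : ℂ) + 1)) * (z + ((j : ℂ) + 1)) ≠ 0 := mul_ne_zero h1 h2
  have hsub : z - -((j : ℂ) + 1) = z + ((j : ℂ) + 1) := by ring
  rw [hsub, div_add_div _ _ h1 h2, div_eq_div_iff hne hmul]
  field_simp
  ring

lemma sum_Icc_symm (F : ℤ → ℂ) (N : ℕ) :
    ∑ k ∈ Finset.Icc (-(N : ℤ)) (N : ℤ), F k
      = F 0 + ∑ j ∈ Finset.range N, (F ((j : ℤ) + 1) + F (-((j : ℤ) + 1))) := by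
  induction N with
  | zero => simp
  | succ N ih =>
    have hset : Finset.Icc (-(N + 1 : ℤ)) ((N + 1 : ℤ))
        = insert (-(N + 1 : ℤ)) (insert ((N + 1 : ℤ)) (Finset.Icc (-(N : ℤ)) (N : ℤ))) := by
      ext k
      simp only [Finset.mem_Icc, Finset.mem_insert]
      omega
    have h1 : (-(N + 1 : ℤ)) ∉ insert ((N + 1 : ℤ)) (Finset.Icc (-(N : ℤ)) (N : ℤ)) := by
      simp only [Finset.mem_insert, Finset.mem_Icc]
      omega
    have h2 : ((N + 1 : ℤ)) ∉ Finset.Icc (-(N : ℤ)) (N : ℤ) := by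
      simp only [Finset.mem_Icc]
      omega
    have hcast : (-(((N : ℕ) + 1 : ℕ)) : ℤ) = -(N + 1 : ℤ) := by push_cast; ring
    have hcast2 : ((((N : ℕ) + 1 : ℕ)) : ℤ) = (N + 1 : ℤ) := by push_cast; ring
    rw [hcast, hcast2, hset, Finset.sum_insert h1, Finset.sum_insert h2, ih,
      Finset.sum_range_succ]
    push_cast
    ring

lemma logDeriv_eulerProd (N : ℕ) {z : ℂ} (hz : ∀ k : ℤ, z ≠ (k : ℂ)) :
    logDeriv (eulerProd N) z = ∑ k ∈ Finset.Icc (-(N : ℤ)) (N : ℤ), 1 / (z - (k : ℂ)) := by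
  have hz0 : z ≠ 0 := by simpa using hz 0
  have hπ : (Real.pi : ℂ) ≠ 0 := by
    exact_mod_cast Real.pi_ne_zero
  have hlin : (fun x : ℂ => (Real.pi : ℂ) * x) z ≠ 0 := mul_ne_zero hπ hz0
  have hprodne : (∏ j ∈ Finset.range N, (1 - z ^ 2 / ((j : ℂ) + 1) ^ 2)) ≠ 0 :=
    Finset.prod_ne_zero_iff.mpr (fun j _ => factor_ne_zero hz j)
  have hdiff : ∀ j : ℕ, DifferentiableAt ℂ (fun x : ℂ => 1 - x ^ 2 / ((j : ℂ) + 1) ^ 2) z :=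
    fun j => (differentiableAt_const 1).sub ((differentiableAt_pow 2).div_const _)
  have hsplit : logDeriv (eulerProd N) z
      = logDeriv (fun x : ℂ => (Real.pi : ℂ) * x) z
        + logDeriv (∏ j ∈ Finset.range N, (fun x : ℂ => 1 - x ^ 2 / ((j : ℂ) + 1) ^ 2) ·) z := by
    have : eulerProd N = fun x => ((Real.pi : ℂ) * x)
        * ∏ j ∈ Finset.range N, (1 - x ^ 2 / ((j : ℂ) + 1) ^ 2) := rfl
    rw [this]
    exact logDeriv_mul z hlin hprodne ((differentiableAt_const _).mul differentiableAt_id)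
      (DifferentiableAt.fun_finsetProd (fun j _ => hdiff j))
  rw [hsplit, logDeriv_prod (fun j _ => factor_ne_zero hz j) (fun j _ => hdiff j)]
  have hlog1 : logDeriv (fun x : ℂ => (Real.pi : ℂ) * x) z = 1 / z := by
    rw [logDeriv_const_mul z _ hπ]
    simp
  rw [hlog1, sum_Icc_symm (fun k => 1 / (z - (k : ℂ))) N]
  have : ∀ j ∈ Finset.range N, logDeriv (fun x : ℂ => 1 - x ^ 2 / ((j : ℂ) + 1) ^ 2) z
      = 1 / (z - (((j : ℤ) + 1 : ℤ) : ℂ)) + 1 / (z - ((-((j : ℤ) + 1) : ℤ) : ℂ)) :=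
    fun j _ => logDeriv_factor hz j
  rw [Finset.sum_congr rfl this]
  simp

lemma tendsto_symm_sum_cot {z : ℂ} (hz : Complex.sin ((Real.pi : ℂ) * z) ≠ 0) :
    Tendsto (fun N : ℕ => ∑ k ∈ Finset.Icc (-(N : ℤ)) (N : ℤ), 1 / (z - (k : ℂ))) atTop
      (𝓝 ((Real.pi : ℂ) * Complex.cos ((Real.pi : ℂ) * z) / Complex.sin ((Real.pi : ℂ) * z))) := by
  have hint : ∀ k : ℤ, z ≠ (k : ℂ) := by
    intro k hk
    apply hz
    rw [Complex.sin_eq_zero_iff]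
    exact ⟨k, by rw [hk]; push_cast; ring⟩
  set s : Set ℂ := Metric.ball z 1 with hs
  have hso : IsOpen s := Metric.isOpen_ball
  have hzs : z ∈ s := Metric.mem_ball_self one_pos
  have hTLU : TendstoLocallyUniformlyOn eulerProd
      (fun x => Complex.sin ((Real.pi : ℂ) * x)) atTop s := by
    apply TendstoUniformlyOn.tendstoLocallyUniformlyOn
    apply (eulerProd_uniformCauchy z).tendstoUniformlyOn_of_tendsto
    intro x _
    exact Complex.tendsto_euler_sin_prod x
  have hdiff : ∀ᶠ N : ℕ in atTop, DifferentiableOn ℂ (eulerProd N) s := by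
    refine Eventually.of_forall fun N => ?_
    apply Differentiable.differentiableOn
    intro x
    exact ((differentiableAt_const _).mul differentiableAt_id).mul
      (DifferentiableAt.fun_finsetProd (fun j _ =>
        (differentiableAt_const 1).sub ((differentiableAt_pow 2).div_const _)))
  have := Complex.logDeriv_tendsto (f := eulerProd) (g := fun x => Complex.sin ((Real.pi : ℂ) * x))
    hso hzs hTLU hdiff hz
  have hld : logDeriv (fun x => Complex.sin ((Real.pi : ℂ) * x)) z
      = (Real.pi : ℂ) * Complex.cos ((Real.pi : ℂ) * z) / Complex.sin ((Real.pi : ℂ) * z) := by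
    rw [logDeriv_apply]
    have hd : HasDerivAt (fun x : ℂ => Complex.sin ((Real.pi : ℂ) * x))
        (Complex.cos ((Real.pi : ℂ) * z) * (Real.pi : ℂ)) z := by
      have h1 : HasDerivAt (fun x : ℂ => (Real.pi : ℂ) * x) (Real.pi : ℂ) z := by
        simpa using (hasDerivAt_id z).const_mul (Real.pi : ℂ)
      exact (Complex.hasDerivAt_sin ((Real.pi : ℂ) * z)).comp z h1
    rw [hd.deriv]
    ring
  rw [hld] at this
  apply this.congr
  intro N
  exact logDeriv_eulerProd N hint

/-- For real `ν, α` with `cosh ν ≠ cos α`, the symmetric partial sums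
`∑_{|k| ≤ N} [1/(2kπ + iν - α) + 1/(2kπ - iν - α)]` converge, as `N → ∞`, to
`-2 e^ν sin α / ((cos α - e^ν)² + sin² α)`. -/
theorem stmt_19 (ν α : ℝ) (h : Real.cosh ν ≠ Real.cos α) :
    Filter.Tendsto
      (fun N : ℕ => ∑ k ∈ Finset.Icc (-(N : ℤ)) (N : ℤ),
        ((1 : ℂ) / (2 * (k : ℂ) * Real.pi + Complex.I * ν - α) +
          1 / (2 * (k : ℂ) * Real.pi - Complex.I * ν - α)))
      Filter.atTop
      (nhds (((-2 * Real.exp ν * Real.sin α /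
        ((Real.cos α - Real.exp ν) ^ 2 + Real.sin α ^ 2) : ℝ) : ℂ))) := by
  have hπ : (Real.pi : ℂ) ≠ 0 := by exact_mod_cast Real.pi_ne_zero
  set a : ℂ := ((α : ℂ) - Complex.I * (ν : ℂ)) / 2 with ha
  set b : ℂ := ((α : ℂ) + Complex.I * (ν : ℂ)) / 2 with hb
  set z₁ : ℂ := a / (Real.pi : ℂ) with hz₁
  set z₂ : ℂ := b / (Real.pi : ℂ) with hz₂
  have hπz₁ : (Real.pi : ℂ) * z₁ = a := by rw [hz₁]; field_simp
  have hπz₂ : (Real.pi : ℂ) * z₂ = b := by rw [hz₂]; field_simp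
  -- product of sines
  have hsin : Complex.sin a * Complex.sin b
      = (Complex.cosh (ν : ℂ) - Complex.cos (α : ℂ)) / 2 := by
    have h1 := Complex.cos_sub_cos ((ν : ℂ) * Complex.I) (α : ℂ)
    have e1 : ((ν : ℂ) * Complex.I + (α : ℂ)) / 2 = b := by rw [hb]; ring
    have e2 : ((ν : ℂ) * Complex.I - (α : ℂ)) / 2 = -a := by rw [ha]; ring
    rw [e1, e2, Complex.sin_neg, Complex.cos_mul_I] at h1
    linear_combination -h1 / 2
  have hcc : Complex.cosh (ν : ℂ) - Complex.cos (α : ℂ) ≠ 0 := by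
    rw [← Complex.ofReal_cosh, ← Complex.ofReal_cos, ← Complex.ofReal_sub]
    exact_mod_cast sub_ne_zero.mpr h
  have hprod_ne : Complex.sin a * Complex.sin b ≠ 0 := by
    rw [hsin]
    exact div_ne_zero hcc two_ne_zero
  have hsa : Complex.sin a ≠ 0 := fun hh => hprod_ne (by rw [hh, zero_mul])
  have hsb : Complex.sin b ≠ 0 := fun hh => hprod_ne (by rw [hh, mul_zero])
  have h₁ := tendsto_symm_sum_cot (z := z₁) (by rw [hπz₁]; exact hsa)
  have h₂ := tendsto_symm_sum_cot (z := z₂) (by rw [hπz₂]; exact hsb)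
  rw [hπz₁] at h₁
  rw [hπz₂] at h₂
  set c : ℂ := -(1 / (2 * (Real.pi : ℂ))) with hc
  have hcomb := ((h₁.add h₂).const_mul c)
  -- rewrite the function
  have hfun : ∀ N : ℕ,
      c * ((∑ k ∈ Finset.Icc (-(N : ℤ)) (N : ℤ), 1 / (z₁ - (k : ℂ)))
        + ∑ k ∈ Finset.Icc (-(N : ℤ)) (N : ℤ), 1 / (z₂ - (k : ℂ)))
      = ∑ k ∈ Finset.Icc (-(N : ℤ)) (N : ℤ),
        ((1 : ℂ) / (2 * (k : ℂ) * Real.pi + Complex.I * ν - α) +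
          1 / (2 * (k : ℂ) * Real.pi - Complex.I * ν - α)) := by
    intro N
    rw [← Finset.sum_add_distrib, Finset.mul_sum]
    refine Finset.sum_congr rfl fun k _ => ?_
    have key : ∀ d w : ℂ, w - (k : ℂ) = -d / (2 * (Real.pi : ℂ)) → c * (1 / (w - (k : ℂ))) = 1 / d := by
      intro d w hw
      have h2π : (2 * (Real.pi : ℂ)) ≠ 0 := mul_ne_zero two_ne_zero hπ
      rw [hw, one_div_div, hc]
      rw [div_neg, mul_neg, neg_mul, neg_neg, div_mul_div_comm, one_mul,
        div_mul_cancel_left₀ h2π, one_div]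
    have k1 : z₁ - (k : ℂ) = -(2 * (k : ℂ) * Real.pi + Complex.I * ν - α) / (2 * (Real.pi : ℂ)) := by
      rw [hz₁, ha]
      field_simp
      ring
    have k2 : z₂ - (k : ℂ) = -(2 * (k : ℂ) * Real.pi - Complex.I * ν - α) / (2 * (Real.pi : ℂ)) := by
      rw [hz₂, hb]
      field_simp
      ring
    rw [mul_add, key _ _ k1, key _ _ k2]
  -- rewrite the limit value
  have hab : a + b = (α : ℂ) := by rw [ha, hb]; ring
  have hsum : Complex.sin (α : ℂ)
      = Complex.sin a * Complex.cos b + Complex.cos a * Complex.sin b := by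
    rw [← hab, Complex.sin_add]
  have hval : c * ((Real.pi : ℂ) * Complex.cos a / Complex.sin a
      + (Real.pi : ℂ) * Complex.cos b / Complex.sin b)
      = ((-2 * Real.exp ν * Real.sin α /
        ((Real.cos α - Real.exp ν) ^ 2 + Real.sin α ^ 2) : ℝ) : ℂ) := by
    have hreal : (-2 * Real.exp ν * Real.sin α /
        ((Real.cos α - Real.exp ν) ^ 2 + Real.sin α ^ 2) : ℝ)
        = -Real.sin α / (Real.cosh ν - Real.cos α) := by
      have hD : (Real.cos α - Real.exp ν) ^ 2 + Real.sin α ^ 2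
          = 2 * Real.exp ν * (Real.cosh ν - Real.cos α) := by
        rw [Real.cosh_eq]
        have h1 : Real.exp ν * Real.exp (-ν) = 1 := by rw [← Real.exp_add]; simp
        linear_combination Real.sin_sq_add_cos_sq α - h1
      rw [hD]
      have hcc' : Real.cosh ν - Real.cos α ≠ 0 := sub_ne_zero.mpr h
      have he : Real.exp ν ≠ 0 := Real.exp_ne_zero ν
      field_simp
    rw [hreal]
    have hcast : ((-Real.sin α / (Real.cosh ν - Real.cos α) : ℝ) : ℂ)
        = -Complex.sin (α : ℂ) / (Complex.cosh (ν : ℂ) - Complex.cos (α : ℂ)) := by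
      push_cast
      ring
    rw [hcast]
    have h2 : Complex.cosh (ν : ℂ) - Complex.cos (α : ℂ)
        = 2 * (Complex.sin a * Complex.sin b) := by linear_combination -2 * hsin
    rw [h2, hsum, hc]
    field_simp
    ring
  rw [← hval]
  exact hcomb.congr hfun
end
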